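/- Let θ > 0 and a ∈ ℝ, set τ = 2·cosh(2θ), Δ = 2 − τ and μ = a/Δ, and define L̂ : ℝ² → ℝ² by L̂(x,y) = (τx − y + a, x). Then for every natural number n ≥ 1 and every x ∈ ℝ, L̂^[n−1](x, 0) = (0, x) if and only if x = 2μ·sinh θ·sinh((n−1)θ) / cosh(nθ). -/

import Mathlib

open Real

set_option maxHeartbeats 1000000 in
theorem stmt_15 (θ a : ℝ) (hθ : 0 < θ)
    (τ Δ μ : ℝ) (hτ : τ = 2 * Real.cosh (2 * θ)) (hΔ : Δ = 2 - τ) (hμ : μ = a / Δ)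
    (L : ℝ × ℝ → ℝ × ℝ) (hL : L = fun z => (τ * z.1 - z.2 + a, z.1)) :
    ∀ n : ℕ, 1 ≤ n → ∀ x : ℝ,
      L^[n - 1] (x, 0) = (0, x) ↔
      x = 2 * μ * Real.sinh θ * Real.sinh (((n : ℝ) - 1) * θ) / Real.cosh ((n : ℝ) * θ) := by
  have hd0 : 0 < Real.sinh (2 * θ) := Real.sinh_pos_iff.mpr (by linarith)
  have hd : Real.sinh (2 * θ) ≠ 0 := hd0.ne'
  have hΔ0 : (2 : ℝ) - 2 * Real.cosh (2 * θ) ≠ 0 := by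
    have h1 : 1 < Real.cosh (2 * θ) := Real.one_lt_cosh.mpr (by positivity)
    nlinarith
  have ha : a = μ * (2 - 2 * Real.cosh (2 * θ)) := by
    rw [hμ, hΔ, hτ]
    exact (div_mul_cancel₀ a hΔ0).symm
  intro n hn x
  have key : ∀ m : ℕ, L^[m] (x, 0) =
      (((x - μ) * Real.sinh (2 * ((m : ℝ) + 1) * θ) + μ * Real.sinh (2 * (m : ℝ) * θ)) /
          Real.sinh (2 * θ) + μ,
        ((x - μ) * Real.sinh (2 * (m : ℝ) * θ) + μ * Real.sinh (2 * ((m : ℝ) - 1) * θ)) /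
          Real.sinh (2 * θ) + μ) := by
    intro m
    induction m with
    | zero =>
      simp only [Function.iterate_zero, id_eq, Nat.cast_zero, Prod.mk.injEq]
      rw [show 2 * ((0:ℝ) + 1) * θ = 2 * θ by ring, show 2 * (0:ℝ) * θ = 0 by ring,
        show 2 * ((0:ℝ) - 1) * θ = -(2 * θ) by ring, Real.sinh_zero, Real.sinh_neg]
      constructor
      · field_simp
        ring
      · field_simp
        ring
    | succ m ih =>
      rw [Function.iterate_succ_apply', ih, hL]
      push_cast
      simp only [Prod.mk.injEq]
      have hE2 : Real.sinh (2 * ((m : ℝ) + 1 + 1) * θ) =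
          Real.sinh (2 * ((m : ℝ) + 1) * θ) * Real.cosh (2 * θ) +
            Real.cosh (2 * ((m : ℝ) + 1) * θ) * Real.sinh (2 * θ) := by
        rw [show 2 * ((m : ℝ) + 1 + 1) * θ = 2 * ((m : ℝ) + 1) * θ + 2 * θ by ring,
          Real.sinh_add]
      have hE0 : Real.sinh (2 * (m : ℝ) * θ) =
          Real.sinh (2 * ((m : ℝ) + 1) * θ) * Real.cosh (2 * θ) -
            Real.cosh (2 * ((m : ℝ) + 1) * θ) * Real.sinh (2 * θ) := by
        rw [show 2 * (m : ℝ) * θ = 2 * ((m : ℝ) + 1) * θ - 2 * θ by ring, Real.sinh_sub]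
      have hEm1 : Real.sinh (2 * ((m : ℝ) - 1) * θ) =
          Real.sinh (2 * ((m : ℝ) + 1) * θ) * (Real.cosh (2 * θ) ^ 2 + Real.sinh (2 * θ) ^ 2)
            - Real.cosh (2 * ((m : ℝ) + 1) * θ) * (2 * Real.sinh (2 * θ) * Real.cosh (2 * θ)) := by
        rw [show 2 * ((m : ℝ) - 1) * θ = 2 * ((m : ℝ) + 1) * θ - 2 * (2 * θ) by ring,
          Real.sinh_sub, Real.sinh_two_mul, Real.cosh_two_mul]
      constructor
      · rw [hE2, hE0, hEm1, hτ, ha]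
        linear_combination (μ * Real.sinh (2 * ((m : ℝ) + 1) * θ) / Real.sinh (2 * θ)) *
          Real.cosh_sq_sub_sinh_sq (2 * θ)
      · rw [show 2 * ((m : ℝ) + 1 - 1) * θ = 2 * (m : ℝ) * θ by ring]
  rw [key (n - 1)]
  have hcast : (((n - 1 : ℕ) : ℝ)) = (n : ℝ) - 1 := by
    rw [Nat.cast_sub hn, Nat.cast_one]
  rw [hcast, Prod.mk.injEq,
    show 2 * ((n : ℝ) - 1 + 1) * θ = 2 * (n : ℝ) * θ by ring]
  have hn1 : (1 : ℝ) ≤ (n : ℝ) := by exact_mod_cast hn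
  have hSn : Real.sinh (2 * (n : ℝ) * θ) ≠ 0 :=
    (Real.sinh_pos_iff.mpr (by nlinarith)).ne'
  have hB : Real.cosh ((n : ℝ) * θ) ≠ 0 := (Real.cosh_pos _).ne'
  set U := Real.exp θ with hU
  set V := Real.exp ((n : ℝ) * θ) with hV
  have hU0 : U ≠ 0 := (Real.exp_pos θ).ne'
  have hV0 : V ≠ 0 := (Real.exp_pos _).ne'
  have eSn : Real.sinh (2 * (n : ℝ) * θ) = (V ^ 2 - (V ^ 2)⁻¹) / 2 := by
    rw [Real.sinh_eq, Real.exp_neg, show 2 * (n : ℝ) * θ = (n : ℝ) * θ + (n : ℝ) * θ by ring,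
      Real.exp_add, ← hV]
    ring
  have ep : Real.sinh (2 * ((n : ℝ) - 1) * θ) = (V ^ 2 / U ^ 2 - U ^ 2 / V ^ 2) / 2 := by
    rw [Real.sinh_eq, Real.exp_neg,
      show 2 * ((n : ℝ) - 1) * θ = ((n : ℝ) * θ + (n : ℝ) * θ) - (θ + θ) by ring,
      Real.exp_sub, Real.exp_add, Real.exp_add, ← hV, ← hU]
    field_simp
  have eq2 : Real.sinh (2 * ((n : ℝ) - 1 - 1) * θ) = (V ^ 2 / U ^ 4 - U ^ 4 / V ^ 2) / 2 := by
    rw [Real.sinh_eq, Real.exp_neg,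
      show 2 * ((n : ℝ) - 1 - 1) * θ = ((n : ℝ) * θ + (n : ℝ) * θ) - (θ + θ + (θ + θ)) by ring,
      Real.exp_sub, Real.exp_add, Real.exp_add, Real.exp_add, ← hV, ← hU]
    field_simp
  have ed : Real.sinh (2 * θ) = (U ^ 2 - (U ^ 2)⁻¹) / 2 := by
    rw [Real.sinh_eq, Real.exp_neg, show 2 * θ = θ + θ by ring, Real.exp_add, ← hU]
    ring
  have es : Real.sinh θ = (U - U⁻¹) / 2 := by
    rw [Real.sinh_eq, Real.exp_neg, ← hU]
  have eA : Real.sinh (((n : ℝ) - 1) * θ) = (V / U - U / V) / 2 := by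
    rw [Real.sinh_eq, Real.exp_neg, show ((n : ℝ) - 1) * θ = (n : ℝ) * θ - θ by ring,
      Real.exp_sub, ← hV, ← hU]
    field_simp
  have eB : Real.cosh ((n : ℝ) * θ) = (V + V⁻¹) / 2 := by
    rw [Real.cosh_eq, Real.exp_neg, ← hV]
  constructor
  · rintro ⟨h1, h2⟩
    have h1'0 : ((x - μ) * Real.sinh (2 * (n : ℝ) * θ) + μ * Real.sinh (2 * ((n : ℝ) - 1) * θ)) /
        Real.sinh (2 * θ) = -μ := by linarith
    rw [div_eq_iff hd] at h1'0
    have hid : μ * Real.sinh (2 * (n : ℝ) * θ) * Real.cosh ((n : ℝ) * θ)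
        - μ * Real.sinh (2 * ((n : ℝ) - 1) * θ) * Real.cosh ((n : ℝ) * θ)
        - μ * Real.sinh (2 * θ) * Real.cosh ((n : ℝ) * θ)
        = Real.sinh (2 * (n : ℝ) * θ) * (2 * μ * Real.sinh θ * Real.sinh (((n : ℝ) - 1) * θ)) := by
      rw [eSn, ep, ed, es, eA, eB]
      field_simp
      ring
    rw [eq_div_iff hB]
    apply mul_left_cancel₀ hSn
    linear_combination Real.cosh ((n : ℝ) * θ) * h1'0 + hid
  · intro hx
    constructor
    · rw [hx]
      field_simp
      rw [eSn, ep, ed, es, eA, eB]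
      field_simp [hU0, hV0]
      ring
    · rw [hx]
      field_simp
      rw [ep, show 2 * θ * ((n : ℝ) - 1 - 1) = 2 * ((n : ℝ) - 1 - 1) * θ by ring, eq2, ed, es, eA, eB]
      field_simp [hU0, hV0]
      ring
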